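/- Let (a,b) and (a',b) be two different lists of pairs such that a' yields a by a unit (i,j)-transfer. Then the number N_2(a,b) of digraph realizations (n×n 0-1 matrices with zero diagonal, row sums b, column sums a) is at least N_2(a',b). -/

import Mathlib

open Finset

/-- Partial sum of the first `k` entries of `a`. -/
def partSum {n : ℕ} (a : Fin n → ℕ) (k : ℕ) : ℕ :=
  ∑ i : Fin n, if (i : ℕ) < k then a i else 0

/-- `a ≺ a'` : `a` is majorized by `a'`. -/
def Majorized {n : ℕ} (a a' : Fin n → ℕ) : Prop :=
  (∀ k : ℕ, partSum a k ≤ partSum a' k) ∧ ∑ i, a i = ∑ i, a' i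

/-- `a` is nonincreasing. -/
def Nonincreasing {n : ℕ} (a : Fin n → ℕ) : Prop :=
  ∀ i j : Fin n, i ≤ j → a j ≤ a i

/-- `b` is nondecreasing. -/
def Nondecreasing {n : ℕ} (b : Fin n → ℕ) : Prop :=
  ∀ i j : Fin n, i ≤ j → b i ≤ b j

/-- `a` is obtained from `a'` by a unit `(i,j)`-transfer. -/
def UnitTransfer {n : ℕ} (a' a : Fin n → ℕ) (i j : Fin n) : Prop :=
  i < j ∧ a' j + 2 ≤ a' i ∧
  a = Function.update (Function.update a' i (a' i - 1)) j (a' j + 1)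

/-- Row sum of a 0-1 matrix. -/
def rowSum {n : ℕ} (M : Fin n → Fin n → Bool) (i : Fin n) : ℕ :=
  ∑ j, if M i j then 1 else 0

/-- Column sum of a 0-1 matrix. -/
def colSum {n : ℕ} (M : Fin n → Fin n → Bool) (j : Fin n) : ℕ :=
  ∑ i, if M i j then 1 else 0

/-- Number of loop-digraph realizations of `(a,b)`:
`n×n` 0-1 matrices with row sums `b` and column sums `a`. -/
noncomputable def N1 {n : ℕ} (a b : Fin n → ℕ) : ℕ :=
  Nat.card {M : Fin n → Fin n → Bool //
    (∀ i, rowSum M i = b i) ∧ (∀ j, colSum M j = a j)}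

def LoopDigraphic {n : ℕ} (a b : Fin n → ℕ) : Prop := 0 < N1 a b

/-- Number of digraph realizations of `(a,b)`:
`n×n` 0-1 matrices with zero diagonal, row sums `b` and column sums `a`. -/
noncomputable def N2 {n : ℕ} (a b : Fin n → ℕ) : ℕ :=
  Nat.card {M : Fin n → Fin n → Bool //
    (∀ i, M i i = false) ∧ (∀ i, rowSum M i = b i) ∧ (∀ j, colSum M j = a j)}

def Digraphic {n : ℕ} (a b : Fin n → ℕ) : Prop := 0 < N2 a b

/-- Number of simple graph realizations of `a` (symmetric 0-1 adjacency matrices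
with zero diagonal and degrees `a`). -/
noncomputable def N3 {n : ℕ} (a : Fin n → ℕ) : ℕ :=
  Nat.card {M : Fin n → Fin n → Bool //
    (∀ i j, M i j = M j i) ∧ (∀ i, M i i = false) ∧ (∀ i, rowSum M i = a i)}

def Graphic {n : ℕ} (a : Fin n → ℕ) : Prop := 0 < N3 a

/-- The minconvex list for parameters `n, m`. -/
def minconvex (n m : ℕ) : Fin n → ℕ :=
  fun i => if (i : ℕ) < m % n then m / n + 1 else m / n

/-- `(a,b)` is lexicographically nonincreasing. -/
def LexNonincreasing {n : ℕ} (a b : Fin n → ℕ) : Prop :=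
  ∀ i j : Fin n, i ≤ j → (a j < a i ∨ (a i = a j ∧ b j ≤ b i))


lemma sum_split {n : ℕ} (i j : Fin n) (hij : i ≠ j) (f : Fin n → ℕ) :
    ∑ c, f c = f i + f j + ∑ c, (if c = i ∨ c = j then 0 else f c) := by
  have h : ∀ c, f c = (if c = i then f i else 0) + (if c = j then f j else 0)
      + (if c = i ∨ c = j then 0 else f c) := by
    intro c
    by_cases h1 : c = i <;> by_cases h2 : c = j <;> simp_all
  rw [Finset.sum_congr rfl (fun c _ => h c)]
  rw [Finset.sum_add_distrib, Finset.sum_add_distrib]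
  simp

def piM {n : ℕ} (i j : Fin n) (M : Fin n → Fin n → Bool) : Fin n → Fin n → Bool :=
  fun r c => if c = i ∨ c = j then false else M r c

lemma piM_comm {n : ℕ} (i j : Fin n) (M : Fin n → Fin n → Bool) :
    piM i j M = piM j i M := by
  funext r c
  unfold piM
  by_cases h1 : c = i <;> by_cases h2 : c = j <;> simp [h1, h2]

lemma row_split {n : ℕ} (i j : Fin n) (hij : i ≠ j) (M : Fin n → Fin n → Bool) (r : Fin n) :
    rowSum M r = rowSum (piM i j M) r + (if M r i then 1 else 0) + (if M r j then 1 else 0) := by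
  unfold rowSum piM
  rw [sum_split i j hij (fun c => if M r c then 1 else 0)]
  have h : ∑ c, (if (if c = i ∨ c = j then false else M r c) then 1 else 0)
      = ∑ c, (if c = i ∨ c = j then (0:ℕ) else if M r c then 1 else 0) :=
    Finset.sum_congr rfl fun c _ => by by_cases h : c = i ∨ c = j <;> simp [h]
  rw [h]; ring

lemma col_split {n : ℕ} (i j : Fin n) (hij : i ≠ j) (M : Fin n → Fin n → Bool) (c : Fin n) :
    colSum M c = (if M i c then 1 else 0) + (if M j c then 1 else 0)
      + ∑ r, (if r = i ∨ r = j then 0 else if M r c then 1 else 0) := by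
  unfold colSum
  exact sum_split i j hij (fun r => if M r c then 1 else 0)

lemma colSum_update {n : ℕ} (M : Fin n → Fin n → Bool) (r : Fin n) (w : Fin n → Bool)
    (c : Fin n) :
    colSum (Function.update M r w) c + (if M r c then 1 else 0)
      = colSum M c + (if w c then 1 else 0) := by
  unfold colSum
  rw [← Finset.add_sum_erase _ _ (Finset.mem_univ r),
      ← Finset.add_sum_erase _ (fun s => if M s c then 1 else 0) (Finset.mem_univ r)]
  have he : ∑ s ∈ Finset.univ.erase r, (if Function.update M r w s c then 1 else 0)
      = ∑ s ∈ Finset.univ.erase r, (if M s c then 1 else 0) := by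
    refine Finset.sum_congr rfl fun s hs => ?_
    rw [Function.update_of_ne (Finset.ne_of_mem_erase hs)]
  rw [Function.update_self, he]
  ring

lemma rowSum_update_ne {n : ℕ} (M : Fin n → Fin n → Bool) (r : Fin n) (w : Fin n → Bool)
    (k : Fin n) (h : k ≠ r) : rowSum (Function.update M r w) k = rowSum M k := by
  unfold rowSum
  rw [Function.update_of_ne h]

def flipM {n : ℕ} (i j : Fin n) (M : Fin n → Fin n → Bool) (r : Fin n) :
    Fin n → Fin n → Bool :=
  Function.update M r (Function.update (Function.update (M r) i false) j true)

lemma flipM_apply_other {n : ℕ} (i j : Fin n) (M : Fin n → Fin n → Bool) (r r' c : Fin n)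
    (hci : c ≠ i) (hcj : c ≠ j) : flipM i j M r r' c = M r' c := by
  unfold flipM
  by_cases hr : r' = r
  · subst hr
    rw [Function.update_self, Function.update_of_ne hcj, Function.update_of_ne hci]
  · rw [Function.update_of_ne hr]

lemma flipM_diag {n : ℕ} (i j : Fin n) (M : Fin n → Fin n → Bool) (r : Fin n)
    (hri : r ≠ i) (hrj : r ≠ j) (hd : ∀ k, M k k = false) :
    ∀ k, flipM i j M r k k = false := by
  intro k
  by_cases hk : k = r
  · subst hk; rw [flipM_apply_other i j M k k k hri hrj]; exact hd k
  · unfold flipM; rw [Function.update_of_ne hk]; exact hd k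

lemma flipM_at_i {n : ℕ} (i j : Fin n) (hij : i ≠ j) (M : Fin n → Fin n → Bool) (r : Fin n) :
    flipM i j M r r i = false := by
  unfold flipM
  rw [Function.update_self, Function.update_of_ne hij, Function.update_self]

lemma flipM_at_j {n : ℕ} (i j : Fin n) (M : Fin n → Fin n → Bool) (r : Fin n) :
    flipM i j M r r j = true := by
  unfold flipM
  rw [Function.update_self, Function.update_self]

lemma flipM_row {n : ℕ} (i j : Fin n) (hij : i ≠ j) (M : Fin n → Fin n → Bool) (r : Fin n)
    (hMi : M r i = true) (hMj : M r j = false) :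
    ∀ k, rowSum (flipM i j M r) k = rowSum M k := by
  intro k
  by_cases hk : k = r
  · subst hk
    rw [row_split i j hij (flipM i j M k) k, row_split i j hij M k]
    rw [flipM_at_i i j hij M k, flipM_at_j i j M k, hMi, hMj]
    have hpi : rowSum (piM i j (flipM i j M k)) k = rowSum (piM i j M) k := by
      unfold rowSum
      refine Finset.sum_congr rfl fun c _ => ?_
      unfold piM
      by_cases hc : c = i ∨ c = j
      · simp [hc]
      · push_neg at hc
        have h : ¬(c = i ∨ c = j) := by tauto
        simp only [if_neg h]
        rw [flipM_apply_other i j M k k c hc.1 hc.2]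
    rw [hpi]
    simp
  · exact rowSum_update_ne M r _ k hk

lemma flipM_pi {n : ℕ} (i j : Fin n) (M : Fin n → Fin n → Bool) (r : Fin n) :
    piM i j (flipM i j M r) = piM i j M := by
  funext r' c
  unfold piM
  by_cases hc : c = i ∨ c = j
  · simp [hc]
  · push_neg at hc
    simp only [if_neg (by tauto : ¬(c = i ∨ c = j))]
    exact flipM_apply_other i j M r r' c hc.1 hc.2

lemma flipM_col_i {n : ℕ} (i j : Fin n) (hij : i ≠ j) (M : Fin n → Fin n → Bool) (r : Fin n)
    (hMi : M r i = true) :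
    colSum (flipM i j M r) i + 1 = colSum M i := by
  have h := colSum_update M r (Function.update (Function.update (M r) i false) j true) i
  rw [hMi] at h
  simp only [if_true] at h
  rw [Function.update_of_ne hij, Function.update_self] at h
  simpa [flipM] using h

lemma flipM_col_j {n : ℕ} (i j : Fin n) (M : Fin n → Fin n → Bool) (r : Fin n)
    (hMj : M r j = false) :
    colSum (flipM i j M r) j = colSum M j + 1 := by
  have h := colSum_update M r (Function.update (Function.update (M r) i false) j true) j
  rw [hMj] at h
  rw [Function.update_self] at h
  simpa [flipM] using h

lemma flipM_col_other {n : ℕ} (i j : Fin n) (M : Fin n → Fin n → Bool) (r : Fin n)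
    (c : Fin n) (hci : c ≠ i) (hcj : c ≠ j) :
    colSum (flipM i j M r) c = colSum M c := by
  have h := colSum_update M r (Function.update (Function.update (M r) i false) j true) c
  rw [Function.update_of_ne hcj, Function.update_of_ne hci] at h
  exact Nat.add_right_cancel h

lemma flipM_flipM {n : ℕ} (i j : Fin n) (hij : i ≠ j) (M : Fin n → Fin n → Bool) (r : Fin n)
    (hMi : M r i = true) (hMj : M r j = false) :
    flipM j i (flipM i j M r) r = M := by
  funext k c
  by_cases hk : k = r
  · subst hk
    by_cases hci : c = i
    · subst hci
      rw [flipM_at_j j c (flipM c j M k) k, hMi]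
    · by_cases hcj : c = j
      · subst hcj
        rw [flipM_at_i c i (Ne.symm hij) (flipM i c M k) k, hMj]
      · rw [flipM_apply_other j i _ k k c hcj hci, flipM_apply_other i j M k k c hci hcj]
  · unfold flipM
    rw [Function.update_of_ne hk, Function.update_of_ne hk]

def Real2 {n : ℕ} (x b : Fin n → ℕ) (M : Fin n → Fin n → Bool) : Prop :=
  (∀ k, M k k = false) ∧ (∀ k, rowSum M k = b k) ∧ (∀ k, colSum M k = x k)

instance {n : ℕ} (x b : Fin n → ℕ) : DecidablePred (Real2 x b) := fun _ => by
  unfold Real2; infer_instance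

def degF {n : ℕ} (i j : Fin n) (M : Fin n → Fin n → Bool) : ℕ :=
  ∑ r, if ¬(r = i ∨ r = j) ∧ M r i = true ∧ M r j = false then 1 else 0

def degB {n : ℕ} (i j : Fin n) (M : Fin n → Fin n → Bool) : ℕ :=
  ∑ r, if ¬(r = i ∨ r = j) ∧ M r i = false ∧ M r j = true then 1 else 0

lemma fiber_le {n : ℕ} (a a' b : Fin n → ℕ) (i j : Fin n) (hij : i ≠ j)
    (h2 : a' j + 2 ≤ a' i)
    (hai : a i + 1 = a' i) (haj : a j = a' j + 1)
    (hak : ∀ k, k ≠ i → k ≠ j → a k = a' k)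
    (O : Fin n → Fin n → Bool) :
    (univ.filter (fun M => Real2 a' b M ∧ piM i j M = O)).card ≤
    (univ.filter (fun M => Real2 a b M ∧ piM i j M = O)).card := by
  classical
  set F' := univ.filter (fun M => Real2 a' b M ∧ piM i j M = O) with hF'def
  set F := univ.filter (fun M => Real2 a b M ∧ piM i j M = O) with hFdef
  set eJ : ℕ := if b j = rowSum O j + 1 then 1 else 0 with heJ
  set eI : ℕ := if b i = rowSum O i + 1 then 1 else 0 with heI
  set Bo : ℕ := ∑ r, (if ¬(r = i ∨ r = j) ∧ b r = rowSum O r + 2 then 1 else 0) with hBo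
  have heJ1 : eJ ≤ 1 := by rw [heJ]; split_ifs <;> omega
  have R1 : ∀ M : Fin n → Fin n → Bool, (∀ k, rowSum M k = b k) → piM i j M = O →
      ∀ r, b r = rowSum O r + (if M r i then 1 else 0) + (if M r j then 1 else 0) := by
    intro M hrs hπ r
    rw [← hrs r, ← hπ]
    exact row_split i j hij M r
  have bothfact : ∀ M : Fin n → Fin n → Bool, (∀ k, rowSum M k = b k) → piM i j M = O →
      ∀ r, ((M r i = true ∧ M r j = true) ↔ b r = rowSum O r + 2) := by
    intro M hrs hπ r
    have h := R1 M hrs hπ r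
    cases hMi : M r i <;> cases hMj : M r j <;>
      rw [hMi, hMj] at h <;> simp at h ⊢ <;> omega
  have eJfact : ∀ M : Fin n → Fin n → Bool, (∀ k, M k k = false) →
      (∀ k, rowSum M k = b k) → piM i j M = O → (if M j i then (1:ℕ) else 0) = eJ := by
    intro M hd hrs hπ
    have h := R1 M hrs hπ j
    rw [hd j] at h
    simp only [Bool.false_eq_true, if_false, add_zero] at h
    rw [heJ]
    cases hMji : M j i <;> simp only [hMji] at h ⊢ <;> simp at h ⊢ <;> omega
  have eIfact : ∀ M : Fin n → Fin n → Bool, (∀ k, M k k = false) →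
      (∀ k, rowSum M k = b k) → piM i j M = O → (if M i j then (1:ℕ) else 0) = eI := by
    intro M hd hrs hπ
    have h := R1 M hrs hπ i
    rw [hd i] at h
    simp only [Bool.false_eq_true, if_false, add_zero] at h
    rw [heI]
    cases hMij : M i j <;> simp only [hMij] at h ⊢ <;> simp at h ⊢ <;> omega
  -- Claim 1
  have claim1 : ∀ M ∈ F', degF i j M + eJ + Bo = a' i := by
    intro M hM
    rw [hF'def, Finset.mem_filter] at hM
    obtain ⟨-, ⟨hd, hrs, hc⟩, hπ⟩ := hM
    have hcol := col_split i j hij M i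
    rw [hc i, hd i] at hcol
    rw [eJfact M hd hrs hπ] at hcol
    have hsum : ∑ r, (if r = i ∨ r = j then (0:ℕ) else if M r i then 1 else 0)
        = Bo + degF i j M := by
      rw [hBo]
      unfold degF
      rw [← Finset.sum_add_distrib]
      refine Finset.sum_congr rfl fun r _ => ?_
      by_cases hr' : r = i ∨ r = j
      · simp [hr']
      · have hb := bothfact M hrs hπ r
        cases hMi : M r i
        · have hb' : ¬ b r = rowSum O r + 2 := fun hh => by
            have := (hb.mpr hh).1; rw [hMi] at this; exact absurd this (by simp)
          simp [hr', hMi, hb']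
        · cases hMj : M r j
          · have hb' : ¬ b r = rowSum O r + 2 := fun hh => by
              have := (hb.mpr hh).2; rw [hMj] at this; exact absurd this (by simp)
            simp [hr', hMi, hMj, hb']
          · have hb' : b r = rowSum O r + 2 := hb.mp ⟨hMi, hMj⟩
            simp [hr', hMi, hMj, hb']
    rw [hsum] at hcol
    simp at hcol
    omega
  -- Claim 2
  have claim2 : ∀ M ∈ F', Bo ≤ a' j := by
    intro M hM
    rw [hF'def, Finset.mem_filter] at hM
    obtain ⟨-, ⟨hd, hrs, hc⟩, hπ⟩ := hM
    have hcol := col_split i j hij M j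
    rw [hc j] at hcol
    have hle : Bo ≤ ∑ r, (if r = i ∨ r = j then (0:ℕ) else if M r j then 1 else 0) := by
      rw [hBo]
      refine Finset.sum_le_sum fun r _ => ?_
      by_cases hr' : r = i ∨ r = j
      · simp [hr']
      · have hb := bothfact M hrs hπ r
        cases hMj : M r j
        · have hb' : ¬ b r = rowSum O r + 2 := fun hh => by
            have := (hb.mpr hh).2; rw [hMj] at this; exact absurd this (by simp)
          simp [hr', hMj, hb']
        · rw [if_neg hr']
          split_ifs <;> simp_all
    omega
  -- Claim 3
  have claim3 : ∀ M ∈ F, degB i j M + eI + Bo = a' j + 1 := by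
    intro M hM
    rw [hFdef, Finset.mem_filter] at hM
    obtain ⟨-, ⟨hd, hrs, hc⟩, hπ⟩ := hM
    have hcol := col_split i j hij M j
    rw [hc j, hd j] at hcol
    rw [eIfact M hd hrs hπ] at hcol
    have hsum : ∑ r, (if r = i ∨ r = j then (0:ℕ) else if M r j then 1 else 0)
        = Bo + degB i j M := by
      rw [hBo]
      unfold degB
      rw [← Finset.sum_add_distrib]
      refine Finset.sum_congr rfl fun r _ => ?_
      by_cases hr' : r = i ∨ r = j
      · simp [hr']
      · have hb := bothfact M hrs hπ r
        cases hMj : M r j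
        · have hb' : ¬ b r = rowSum O r + 2 := fun hh => by
            have := (hb.mpr hh).2; rw [hMj] at this; exact absurd this (by simp)
          simp [hr', hMj, hb']
        · cases hMi : M r i
          · have hb' : ¬ b r = rowSum O r + 2 := fun hh => by
              have := (hb.mpr hh).1; rw [hMi] at this; exact absurd this (by simp)
            simp [hr', hMi, hMj, hb']
          · have hb' : b r = rowSum O r + 2 := hb.mp ⟨hMi, hMj⟩
            simp [hr', hMi, hMj, hb']
    rw [hsum] at hcol
    simp at hcol
    omega
  -- the double counting bijection
  have key : ∑ M ∈ F', degF i j M = ∑ M ∈ F, degB i j M := by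
    have h1 : ∀ M : Fin n → Fin n → Bool, degF i j M =
        (univ.filter fun r => ¬(r = i ∨ r = j) ∧ M r i = true ∧ M r j = false).card := by
      intro M; unfold degF; rw [Finset.card_filter]
    have h2' : ∀ M : Fin n → Fin n → Bool, degB i j M =
        (univ.filter fun r => ¬(r = i ∨ r = j) ∧ M r i = false ∧ M r j = true).card := by
      intro M; unfold degB; rw [Finset.card_filter]
    rw [Finset.sum_congr rfl fun M _ => h1 M, Finset.sum_congr rfl fun M _ => h2' M,
        ← Finset.card_sigma, ← Finset.card_sigma]
    refine Finset.card_nbij' (fun p => ⟨flipM i j p.1 p.2, p.2⟩)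
      (fun p => ⟨flipM j i p.1 p.2, p.2⟩) ?_ ?_ ?_ ?_
    · rintro ⟨M, r⟩ hp
      dsimp only
      rw [Finset.mem_coe, Finset.mem_sigma] at hp
      obtain ⟨hMF, hr⟩ := hp
      rw [hF'def, Finset.mem_filter] at hMF
      obtain ⟨-, ⟨hd, hrs, hc⟩, hπ⟩ := hMF
      rw [Finset.mem_filter] at hr
      obtain ⟨-, hr', hMi, hMj⟩ := hr
      push_neg at hr'
      rw [Finset.mem_coe, Finset.mem_sigma]
      dsimp only
      constructor
      · rw [hFdef, Finset.mem_filter]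
        refine ⟨Finset.mem_univ _, ⟨?_, ?_, ?_⟩, ?_⟩
        · exact flipM_diag i j M r hr'.1 hr'.2 hd
        · intro k; rw [flipM_row i j hij M r hMi hMj k]; exact hrs k
        · intro k
          by_cases hki : k = i
          · rw [hki]
            have := flipM_col_i i j hij M r hMi
            rw [hc i] at this
            omega
          · by_cases hkj : k = j
            · rw [hkj]
              rw [flipM_col_j i j M r hMj, hc j, haj]
            · rw [flipM_col_other i j M r k hki hkj, hc k, hak k hki hkj]
        · rw [flipM_pi i j M r]; exact hπ
      · rw [Finset.mem_filter]
        refine ⟨Finset.mem_univ _, by tauto, ?_, ?_⟩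
        · exact flipM_at_i i j hij M r
        · exact flipM_at_j i j M r
    · rintro ⟨M, r⟩ hp
      dsimp only
      rw [Finset.mem_coe, Finset.mem_sigma] at hp
      obtain ⟨hMF, hr⟩ := hp
      rw [hFdef, Finset.mem_filter] at hMF
      obtain ⟨-, ⟨hd, hrs, hc⟩, hπ⟩ := hMF
      rw [Finset.mem_filter] at hr
      obtain ⟨-, hr', hMi, hMj⟩ := hr
      push_neg at hr'
      rw [Finset.mem_coe, Finset.mem_sigma]
      dsimp only
      constructor
      · rw [hF'def, Finset.mem_filter]
        refine ⟨Finset.mem_univ _, ⟨?_, ?_, ?_⟩, ?_⟩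
        · exact flipM_diag j i M r hr'.2 hr'.1 hd
        · intro k; rw [flipM_row j i (Ne.symm hij) M r hMj hMi k]; exact hrs k
        · intro k
          by_cases hki : k = i
          · rw [hki]
            rw [flipM_col_j j i M r hMi, hc i]
            omega
          · by_cases hkj : k = j
            · rw [hkj]
              have := flipM_col_i j i (Ne.symm hij) M r hMj
              rw [hc j, haj] at this
              omega
            · rw [flipM_col_other j i M r k hkj hki, hc k, hak k hki hkj]
        · rw [piM_comm, flipM_pi j i M r, ← piM_comm]; exact hπ
      · rw [Finset.mem_filter]
        refine ⟨Finset.mem_univ _, by tauto, ?_, ?_⟩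
        · exact flipM_at_j j i M r
        · exact flipM_at_i j i (Ne.symm hij) M r
    · rintro ⟨M, r⟩ hp
      dsimp only
      rw [Finset.mem_coe, Finset.mem_sigma] at hp
      obtain ⟨-, hr⟩ := hp
      rw [Finset.mem_filter] at hr
      obtain ⟨-, hr', hMi, hMj⟩ := hr
      have := flipM_flipM i j hij M r hMi hMj
      simp only [this]
    · rintro ⟨M, r⟩ hp
      dsimp only
      rw [Finset.mem_coe, Finset.mem_sigma] at hp
      obtain ⟨-, hr⟩ := hp
      rw [Finset.mem_filter] at hr
      obtain ⟨-, hr', hMi, hMj⟩ := hr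
      have := flipM_flipM j i (Ne.symm hij) M r hMj hMi
      simp only [this]
  -- final arithmetic
  rcases F'.eq_empty_or_nonempty with hE | ⟨M₀, hM₀⟩
  · simp [hE]
  · have hc'pos : 0 < degF i j M₀ := by
      have hA := claim1 M₀ hM₀
      have hB := claim2 M₀ hM₀
      omega
    have hconst' : ∀ M ∈ F', degF i j M = degF i j M₀ := fun M hM => by
      have hx := claim1 M hM; have hy := claim1 M₀ hM₀; omega
    have hsum' : ∑ M ∈ F', degF i j M = F'.card * degF i j M₀ := by
      rw [Finset.sum_congr rfl hconst', Finset.sum_const, smul_eq_mul]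
    rcases F.eq_empty_or_nonempty with hE2 | ⟨M₁, hM₁⟩
    · have : ∑ M ∈ F, degB i j M = 0 := by rw [hE2]; simp
      rw [this] at key
      rw [hsum'] at key
      have : F'.card = 0 := by
        rcases Nat.mul_eq_zero.mp key with h | h
        · exact h
        · omega
      omega
    · have hconst : ∀ M ∈ F, degB i j M = degB i j M₁ := fun M hM => by
        have hx := claim3 M hM; have hy := claim3 M₁ hM₁; omega
      have hsum : ∑ M ∈ F, degB i j M = F.card * degB i j M₁ := by
        rw [Finset.sum_congr rfl hconst, Finset.sum_const, smul_eq_mul]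
      have hcc : degB i j M₁ ≤ degF i j M₀ := by
        have hA := claim1 M₀ hM₀
        have hB := claim2 M₀ hM₀
        have hC := claim3 M₁ hM₁
        omega
      rw [hsum', hsum] at key
      have : F'.card * degF i j M₀ ≤ F.card * degF i j M₀ := by
        rw [key]
        exact Nat.mul_le_mul_left _ hcc
      exact Nat.le_of_mul_le_mul_right this hc'pos

lemma N2_eq {n : ℕ} (x b : Fin n → ℕ) :
    N2 x b = (univ.filter (fun M : Fin n → Fin n → Bool => Real2 x b M)).card := by
  rw [show N2 x b = Nat.card {M : Fin n → Fin n → Bool // Real2 x b M} from rfl]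
  rw [Nat.card_eq_fintype_card, Fintype.card_subtype]

theorem stmt14 {n : ℕ} (a a' b : Fin n → ℕ) (i j : Fin n)
    (hne : a ≠ a') (ht : UnitTransfer a' a i j) :
    N2 a' b ≤ N2 a b := by
    classical
  obtain ⟨hlt, h2, ha⟩ := ht
  have hij : i ≠ j := ne_of_lt hlt
  have hai : a i + 1 = a' i := by
    rw [ha, Function.update_of_ne hij, Function.update_self]
    omega
  have haj : a j = a' j + 1 := by
    rw [ha, Function.update_self]
  have hak : ∀ k, k ≠ i → k ≠ j → a k = a' k := by
    intro k hki hkj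
    rw [ha, Function.update_of_ne hkj, Function.update_of_ne hki]
  rw [N2_eq, N2_eq]
  rw [Finset.card_eq_sum_card_fiberwise (f := piM i j) (t := univ) (fun x _ => mem_univ _),
      Finset.card_eq_sum_card_fiberwise (f := piM i j) (t := univ) (fun x _ => mem_univ _)]
  refine Finset.sum_le_sum fun O _ => ?_
  rw [Finset.filter_filter, Finset.filter_filter]
  exact fiber_le a a' b i j hij h2 hai haj hak O
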